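/- arXiv:2512.16665 — 2 statements merged into one kernel-verified Lean document; each statement's English description precedes it below -/
import Mathlib

section
/- Fix integers M ≥ 2 and k ≥ 1. For n ≥ k define T(n) := min { t ∈ ℕ : ∑_{l=0}^{t} C(n,l)(M-1)^l > M^{n-k} } (the minimum exists since the full sum at t = n equals M^n > M^{n-k}). Then T is monotonically increasing: for all n ≥ k, T(n+1) ≥ T(n). -/
/-- M-ary Hamming ball volume `V n t = ∑_{l=0}^t C(n,l)(M-1)^l`. -/
def hammingBallVol (M n t : ℕ) : ℕ :=
  ∑ l ∈ Finset.range (t + 1), Nat.choose n l * (M - 1) ^ l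

/-- `T n` = least `t` with `V_n(t) > M^(n-k)`. -/
noncomputable def hammingRadius (M k n : ℕ) : ℕ :=
  sInf {t : ℕ | M ^ (n - k) < hammingBallVol M n t}

lemma vol_full (M n : ℕ) (hM : 1 ≤ M) : hammingBallVol M n n = M ^ n := by
  have h : M = (M - 1) + 1 := by omega
  rw [hammingBallVol]
  conv_rhs => rw [h]
  rw [add_pow]
  simp [mul_comm]

lemma vol_succ_le (M n t : ℕ) (hM : 1 ≤ M) :
    hammingBallVol M (n + 1) t ≤ M * hammingBallVol M n t := by
  set x := M - 1 with hx
  have key : hammingBallVol M (n + 1) t =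
      hammingBallVol M n t + x * ∑ i ∈ Finset.range t, Nat.choose n i * x ^ i := by
    rw [hammingBallVol, Finset.sum_range_succ', hammingBallVol, Finset.sum_range_succ']
    simp only [Nat.choose_succ_succ, add_mul, Finset.sum_add_distrib, Nat.choose_zero_right,
      pow_zero, mul_one, Finset.mul_sum]
    have e : ∀ i ∈ Finset.range t,
        Nat.choose n i * (M - 1) ^ (i + 1) = (M - 1) * (Nat.choose n i * (M - 1) ^ i) :=
      fun i _ => by ring
    rw [Finset.sum_congr rfl e]
    ring
  have hle : ∑ i ∈ Finset.range t, Nat.choose n i * x ^ i ≤ hammingBallVol M n t := by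
    rw [hammingBallVol]
    apply Finset.sum_le_sum_of_subset
    exact Finset.range_subset_range.2 (Nat.le_succ t)
  calc hammingBallVol M (n + 1) t ≤ hammingBallVol M n t + x * hammingBallVol M n t := by
        rw [key]; exact Nat.add_le_add_left (Nat.mul_le_mul_left _ hle) _
    _ = (x + 1) * hammingBallVol M n t := by ring
    _ = M * hammingBallVol M n t := by rw [hx]; congr 1; omega

theorem stmt_2 (M k : ℕ) (hM : 2 ≤ M) (hk : 1 ≤ k) :
    ∀ n : ℕ, k ≤ n → hammingRadius M k n ≤ hammingRadius M k (n + 1) := by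
  intro n hn
  have hM1 : 1 ≤ M := by omega
  have hne : {t : ℕ | M ^ (n + 1 - k) < hammingBallVol M (n + 1) t}.Nonempty := by
    refine ⟨n + 1, ?_⟩
    simp only [Set.mem_setOf_eq, vol_full M (n + 1) hM1]
    exact Nat.pow_lt_pow_right hM (by omega)
  have hmem := Nat.sInf_mem hne
  set T := sInf {t : ℕ | M ^ (n + 1 - k) < hammingBallVol M (n + 1) t}
  have h1 : M ^ (n + 1 - k) < hammingBallVol M (n + 1) T := hmem
  have h2 : M ^ (n - k) < hammingBallVol M n T := by
    have hstep : hammingBallVol M (n + 1) T ≤ M * hammingBallVol M n T :=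
      vol_succ_le M n T hM1
    have hpow : M ^ (n + 1 - k) = M * M ^ (n - k) := by
      rw [show n + 1 - k = (n - k) + 1 by omega, pow_succ, mul_comm]
    have : M * M ^ (n - k) < M * hammingBallVol M n T := by
      rw [← hpow]; exact lt_of_lt_of_le h1 hstep
    exact lt_of_mul_lt_mul_left this (Nat.zero_le M)
  exact Nat.sInf_le h2
end

section
/- Let M ≥ 2 be an integer, 0 < δ < (M-1)/M, and n a positive natural number such that δn is a natural number. Then the Hamming ball volume satisfies (1/(n+1)) · M^{n·H_M(δ)} ≤ ∑_{l=0}^{δn} C(n,l)(M-1)^l, where H_M(δ) = δ·log_M(M-1) − δ·log_M(δ) − (1−δ)·log_M(1−δ) is the M-ary entropy function. -/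
lemma step_id' (n m k : ℕ) (hk : k < n) :
    n.choose (k+1) * m ^ (k+1) * (n-m) ^ (n-(k+1)) * ((k+1) * (n-m))
      = n.choose k * m ^ k * (n-m) ^ (n-k) * ((n-k) * m) := by
  have h1 : n.choose (k+1) * (k+1) = n.choose k * (n - k) := Nat.choose_succ_right_eq n k
  have h2 : (n-m) ^ (n-(k+1)) * (n-m) = (n-m) ^ (n-k) := by
    rw [← pow_succ]; congr 1; omega
  calc n.choose (k+1) * m ^ (k+1) * (n-m) ^ (n-(k+1)) * ((k+1) * (n-m))
      = (n.choose (k+1) * (k+1)) * (m ^ k * m) * ((n-m) ^ (n-(k+1)) * (n-m)) := by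
        rw [pow_succ]; ring
    _ = (n.choose k * (n - k)) * (m ^ k * m) * (n-m) ^ (n-k) := by rw [h1, h2]
    _ = n.choose k * m ^ k * (n-m) ^ (n-k) * ((n-k) * m) := by ring

lemma max_term' (n m : ℕ) (hm : 1 ≤ m) (hmn : m < n) :
    ∀ k, n.choose k * m ^ k * (n-m) ^ (n-k) ≤ n.choose m * m ^ m * (n-m) ^ (n-m) := by
  set f : ℕ → ℕ := fun k => n.choose k * m ^ k * (n-m) ^ (n-k) with hf
  have hup : ∀ k, k < m → f k ≤ f (k+1) := by
    intro k hk
    have hkn : k < n := lt_trans hk hmn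
    have hid := step_id' n m k hkn
    have hpos : 0 < (n - k) * m := Nat.mul_pos (by omega) hm
    have hle : (k+1) * (n-m) ≤ (n-k) * m := by
      calc (k+1) * (n-m) ≤ m * (n-k) := Nat.mul_le_mul (by omega) (by omega)
        _ = (n-k) * m := Nat.mul_comm _ _
    apply Nat.le_of_mul_le_mul_right _ hpos
    calc f k * ((n-k) * m) = f (k+1) * ((k+1) * (n-m)) := hid.symm
      _ ≤ f (k+1) * ((n-k) * m) := Nat.mul_le_mul_left _ hle
  have hdn : ∀ k, m ≤ k → k < n → f (k+1) ≤ f k := by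
    intro k hk hkn
    have hid := step_id' n m k hkn
    have hpos : 0 < (k+1) * (n-m) := Nat.mul_pos (by omega) (by omega)
    have hle : (n-k) * m ≤ (k+1) * (n-m) := by
      calc (n-k) * m = m * (n-k) := Nat.mul_comm _ _
        _ ≤ (k+1) * (n-m) := Nat.mul_le_mul (by omega) (by omega)
    apply Nat.le_of_mul_le_mul_right _ hpos
    calc f (k+1) * ((k+1) * (n-m)) = f k * ((n-k) * m) := hid
      _ ≤ f k * ((k+1) * (n-m)) := Nat.mul_le_mul_left _ hle
  have hlow : ∀ j, j ≤ m → f (m - j) ≤ f m := by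
    intro j
    induction j with
    | zero => intro _; simp
    | succ i ih =>
      intro hij
      have h1 : f (m - (i+1)) ≤ f (m - (i+1) + 1) := hup _ (by omega)
      have h2 : m - (i+1) + 1 = m - i := by omega
      rw [h2] at h1
      exact le_trans h1 (ih (by omega))
  have hhigh : ∀ j, f (m + j) ≤ f m := by
    intro j
    induction j with
    | zero => simp
    | succ i ih =>
      by_cases h : m + i < n
      · have h3 := hdn (m + i) (by omega) h
        have h2 : m + (i+1) = m + i + 1 := by omega
        rw [h2]
        exact le_trans h3 ih
      · have hz : n.choose (m + (i+1)) = 0 := Nat.choose_eq_zero_of_lt (by omega)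
        show n.choose (m+(i+1)) * m ^ (m+(i+1)) * (n-m) ^ (n-(m+(i+1))) ≤ f m
        rw [hz]; simp
  intro k
  rcases le_or_gt k m with h | h
  · have h1 := hlow (m - k) (by omega)
    have h2 : m - (m - k) = k := by omega
    rwa [h2] at h1
  · have h1 := hhigh (k - m)
    have h2 : m + (k - m) = k := by omega
    rwa [h2] at h1

lemma key_nat' (n m : ℕ) (hm : 1 ≤ m) (hmn : m < n) :
    n ^ n ≤ (n + 1) * (n.choose m * m ^ m * (n - m) ^ (n - m)) := by
  have hsum : n ^ n = ∑ k ∈ Finset.range (n+1), m ^ k * (n-m) ^ (n-k) * n.choose k := by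
    have h := add_pow m (n-m) n
    simp only [Nat.cast_id] at h
    rw [← h]
    congr 1
    omega
  rw [hsum]
  calc ∑ k ∈ Finset.range (n+1), m ^ k * (n-m) ^ (n-k) * n.choose k
      ≤ ∑ _k ∈ Finset.range (n+1), n.choose m * m ^ m * (n - m) ^ (n - m) := by
        apply Finset.sum_le_sum
        intro k _
        calc m ^ k * (n-m) ^ (n-k) * n.choose k = n.choose k * m ^ k * (n-m) ^ (n-k) := by ring
          _ ≤ _ := max_term' n m hm hmn k
    _ = (n + 1) * (n.choose m * m ^ m * (n - m) ^ (n - m)) := by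
        rw [Finset.sum_const, Finset.card_range]; ring

/-- The M-ary entropy function. -/
noncomputable def maryEntropy (M : ℕ) (δ : ℝ) : ℝ :=
  δ * Real.logb M (M - 1) - δ * Real.logb M δ - (1 - δ) * Real.logb M (1 - δ)

theorem stmt_4 (M n m : ℕ) (δ : ℝ) (hM : 2 ≤ M) (hn : 1 ≤ n)
    (hδ0 : 0 < δ) (hδ1 : δ < (M - 1 : ℝ) / M) (hm : (m : ℝ) = δ * n) :
    (1 / (n + 1 : ℝ)) * (M : ℝ) ^ ((n : ℝ) * maryEntropy M δ) ≤
      ∑ l ∈ Finset.range (m + 1), (Nat.choose n l : ℝ) * ((M : ℝ) - 1) ^ l := by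
  have hM0 : (0:ℝ) < M := by
    have : (2:ℝ) ≤ M := by exact_mod_cast hM
    linarith
  have hM1 : (1:ℝ) ≤ (M:ℝ) - 1 := by
    have : (2:ℝ) ≤ M := by exact_mod_cast hM
    linarith
  have hMne1 : (M:ℝ) ≠ 1 := by
    have : (2:ℝ) ≤ M := by exact_mod_cast hM
    linarith
  have hnpos : (0:ℝ) < n := by exact_mod_cast hn
  have hδlt1 : δ < 1 := lt_of_lt_of_le hδ1 (by rw [div_le_one hM0]; linarith)
  have h1δ : 0 < 1 - δ := by linarith
  have hm1 : 1 ≤ m := by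
    rcases Nat.eq_zero_or_pos m with h | h
    · exfalso
      rw [h] at hm
      simp at hm
      rcases hm with h' | h'
      · linarith
      · omega
    · exact h
  have hmn : m < n := by
    have : (m:ℝ) < n := by
      rw [hm]
      nlinarith
    exact_mod_cast this
  have hcast : ((n - m : ℕ) : ℝ) = (n:ℝ) - m := by
    rw [Nat.cast_sub hmn.le]
  have hnd : (n:ℝ) * δ = m := by rw [hm]; ring
  have hnd2 : (n:ℝ) * (1 - δ) = ((n - m : ℕ) : ℝ) := by
    rw [hcast]; linarith [hnd]
  set X : ℝ := ((M:ℝ) - 1) ^ m / (δ ^ m * (1 - δ) ^ (n - m)) with hX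
  have hDpos : 0 < δ ^ m * (1 - δ) ^ (n - m) := by positivity
  have hXpos : 0 < X := by
    rw [hX]
    have : (0:ℝ) < ((M:ℝ) - 1) ^ m := by positivity
    positivity
  have hE : (n:ℝ) * maryEntropy M δ = Real.logb M X := by
    rw [hX, Real.logb_div (by positivity) (by positivity), Real.logb_mul (by positivity)
      (by positivity), Real.logb_pow, Real.logb_pow, Real.logb_pow]
    unfold maryEntropy
    linear_combination Real.logb M ((M:ℝ) - 1) * hnd - Real.logb M δ * hnd
      - Real.logb M (1 - δ) * hnd2
  have hrw : (M : ℝ) ^ ((n : ℝ) * maryEntropy M δ) = X := by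
    rw [hE, Real.rpow_logb hM0 hMne1 hXpos]
  rw [hrw]
  have hterm : (n.choose m : ℝ) * ((M:ℝ) - 1) ^ m ≤
      ∑ l ∈ Finset.range (m + 1), (Nat.choose n l : ℝ) * ((M : ℝ) - 1) ^ l := by
    apply Finset.single_le_sum (f := fun l => (Nat.choose n l : ℝ) * ((M:ℝ) - 1) ^ l)
    · intro i _
      have : (0:ℝ) ≤ ((M:ℝ) - 1) ^ i := by positivity
      positivity
    · exact Finset.self_mem_range_succ m
  refine le_trans ?_ hterm
  -- key inequality: 1/(n+1) ≤ choose * D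
  have hD : δ ^ m * (1 - δ) ^ (n - m) =
      ((m:ℝ) ^ m * ((n - m : ℕ) : ℝ) ^ (n - m)) / (n:ℝ) ^ n := by
    have hδeq : δ = (m:ℝ) / n := by
      field_simp
      linarith [hm]
    have h1δeq : 1 - δ = ((n - m : ℕ) : ℝ) / n := by
      rw [hcast, hδeq]
      field_simp
    rw [h1δeq, hδeq, div_pow, div_pow, div_mul_div_comm, ← pow_add]
    congr 2
    omega
  have hkeyR : (n:ℝ) ^ n ≤ ((n:ℝ) + 1) *
      ((n.choose m : ℝ) * (m:ℝ) ^ m * ((n - m : ℕ) : ℝ) ^ (n - m)) := by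
    exact_mod_cast key_nat' n m hm1 hmn
  have hkey2 : 1 / ((n:ℝ) + 1) ≤ (n.choose m : ℝ) * (δ ^ m * (1 - δ) ^ (n - m)) := by
    rw [hD, mul_div_assoc', div_le_div_iff₀ (by positivity) (by positivity)]
    calc (1:ℝ) * (n:ℝ) ^ n = (n:ℝ) ^ n := by ring
      _ ≤ ((n:ℝ) + 1) * ((n.choose m : ℝ) * (m:ℝ) ^ m * ((n - m : ℕ) : ℝ) ^ (n - m)) := hkeyR
      _ = (n.choose m : ℝ) * ((m:ℝ) ^ m * ((n - m : ℕ) : ℝ) ^ (n - m)) * ((n:ℝ) + 1) := by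
          ring
  calc (1 / ((n:ℝ) + 1)) * X
      ≤ ((n.choose m : ℝ) * (δ ^ m * (1 - δ) ^ (n - m))) * X :=
        mul_le_mul_of_nonneg_right hkey2 hXpos.le
    _ = (n.choose m : ℝ) * ((M:ℝ) - 1) ^ m := by
        rw [hX]
        field_simp
end
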